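/- arXiv:2304.04944 — 3 statements merged into one kernel-verified Lean document; each statement's English description precedes it below -/
import Mathlib

section
/- Fix an integer b ≥ 2 and H ∈ (0,1), and let R_H(u,v;s,t) := (1/2)·(|v−s|^{2H} + |u−t|^{2H} − |v−t|^{2H} − |u−s|^{2H}). Let n ∈ ℕ and let 0 ≤ u ≤ v ≤ 1 be such that u·bⁿ and v·bⁿ are integers. Then for every family of real numbers (μ_j)_{1 ≤ j ≤ b^{n+1}}: ∑_{j=1}^{b^{n+1}} |μ_j| · |R_H((j−1)·b^{−(n+1)}, j·b^{−(n+1)}; u, v)| ≤ ∑_{i=1}^{bⁿ} ( max_{(i−1)b < j ≤ ib} |μ_j| ) · |R_H((i−1)·b^{−n}, i·b^{−n}; u, v)|. -/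
open Finset Set

private lemma submod_convex {p : ℝ} (hp : 1 ≤ p) {x c l : ℝ}
    (hx : 0 ≤ x) (hc : 0 ≤ c) (hl : 0 ≤ l) :
    (x + l) ^ p + (x + c) ^ p ≤ x ^ p + (x + c + l) ^ p := by
  have hf := convexOn_rpow hp
  rcases eq_or_lt_of_le (add_nonneg hc hl) with h | h
  · have hc0 : c = 0 := by linarith
    have hl0 : l = 0 := by linarith
    simp [hc0, hl0]
  · have hmem : x + (c + l) ∈ Ici (0:ℝ) := by simp; linarith
    have h1 := hf.2 (mem_Ici.2 hx) hmem (div_nonneg hc h.le) (div_nonneg hl h.le)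
      (by field_simp <;> ring)
    have h2 := hf.2 (mem_Ici.2 hx) hmem (div_nonneg hl h.le) (div_nonneg hc h.le)
      (by field_simp <;> ring)
    have e1 : (c/(c+l)) • x + (l/(c+l)) • (x + (c + l)) = x + l := by
      simp only [smul_eq_mul]
      rw [div_mul_eq_mul_div, div_mul_eq_mul_div, ← add_div, div_eq_iff h.ne']
      ring
    have e2 : (l/(c+l)) • x + (c/(c+l)) • (x + (c + l)) = x + c := by
      simp only [smul_eq_mul]
      rw [div_mul_eq_mul_div, div_mul_eq_mul_div, ← add_div, div_eq_iff h.ne']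
      ring
    rw [e1] at h1; rw [e2] at h2
    simp only [smul_eq_mul] at h1 h2
    have key : c / (c+l) + l / (c+l) = 1 := by field_simp
    calc (x + l) ^ p + (x + c) ^ p
        ≤ (c/(c+l) * x ^ p + l/(c+l) * (x + (c+l)) ^ p)
          + (l/(c+l) * x ^ p + c/(c+l) * (x + (c+l)) ^ p) := add_le_add h1 h2
      _ = (c/(c+l) + l/(c+l)) * x ^ p + (c/(c+l) + l/(c+l)) * (x + (c+l)) ^ p := by ring
      _ = x ^ p + (x + c + l) ^ p := by rw [key]; ring_nf

private lemma submod_concave {p : ℝ} (hp0 : 0 ≤ p) (hp : p ≤ 1) {x c l : ℝ}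
    (hx : 0 ≤ x) (hc : 0 ≤ c) (hl : 0 ≤ l) :
    x ^ p + (x + c + l) ^ p ≤ (x + l) ^ p + (x + c) ^ p := by
  have hf := Real.concaveOn_rpow hp0 hp
  rcases eq_or_lt_of_le (add_nonneg hc hl) with h | h
  · have hc0 : c = 0 := by linarith
    have hl0 : l = 0 := by linarith
    simp [hc0, hl0]
  · have hmem : x + (c + l) ∈ Ici (0:ℝ) := by simp; linarith
    have h1 := hf.2 (mem_Ici.2 hx) hmem (div_nonneg hc h.le) (div_nonneg hl h.le)
      (by field_simp <;> ring)
    have h2 := hf.2 (mem_Ici.2 hx) hmem (div_nonneg hl h.le) (div_nonneg hc h.le)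
      (by field_simp <;> ring)
    have e1 : (c/(c+l)) • x + (l/(c+l)) • (x + (c + l)) = x + l := by
      simp only [smul_eq_mul]
      rw [div_mul_eq_mul_div, div_mul_eq_mul_div, ← add_div, div_eq_iff h.ne']
      ring
    have e2 : (l/(c+l)) • x + (c/(c+l)) • (x + (c + l)) = x + c := by
      simp only [smul_eq_mul]
      rw [div_mul_eq_mul_div, div_mul_eq_mul_div, ← add_div, div_eq_iff h.ne']
      ring
    rw [e1] at h1; rw [e2] at h2
    simp only [smul_eq_mul] at h1 h2
    have key : c / (c+l) + l / (c+l) = 1 := by field_simp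
    calc x ^ p + (x + c + l) ^ p
        = (c/(c+l) + l/(c+l)) * x ^ p + (c/(c+l) + l/(c+l)) * (x + (c+l)) ^ p := by
          rw [key]; ring_nf
      _ = (c/(c+l) * x ^ p + l/(c+l) * (x + (c+l)) ^ p)
          + (l/(c+l) * x ^ p + c/(c+l) * (x + (c+l)) ^ p) := by ring
      _ ≤ (x + l) ^ p + (x + c) ^ p := add_le_add h1 h2

/-- Sign constancy of the covariance kernel on subintervals of a block that is
nested in or disjoint from `[u,v]`. -/
private lemma sign_const (p : ℝ) (hp0 : 0 < p) (u v lo hi : ℝ) (huv : u ≤ v)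
    (hcase : hi ≤ u ∨ (u ≤ lo ∧ hi ≤ v) ∨ v ≤ lo) :
    (∀ s t : ℝ, lo ≤ s → s ≤ t → t ≤ hi →
        0 ≤ (1/2) * (|t - u| ^ p + |s - v| ^ p - |t - v| ^ p - |s - u| ^ p)) ∨
    (∀ s t : ℝ, lo ≤ s → s ≤ t → t ≤ hi →
        (1/2) * (|t - u| ^ p + |s - v| ^ p - |t - v| ^ p - |s - u| ^ p) ≤ 0) := by
  rcases hcase with h | ⟨h1, h2⟩ | h
  · -- block left of u : s ≤ t ≤ u ≤ v
    rcases le_total 1 p with hp | hp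
    · left
      intro s t hs hst ht
      have htu : t ≤ u := le_trans ht h
      have e1 : |t - u| = u - t := by rw [abs_sub_comm]; exact abs_of_nonneg (by linarith)
      have e2 : |s - v| = v - s := by rw [abs_sub_comm]; exact abs_of_nonneg (by linarith)
      have e3 : |t - v| = v - t := by rw [abs_sub_comm]; exact abs_of_nonneg (by linarith)
      have e4 : |s - u| = u - s := by rw [abs_sub_comm]; exact abs_of_nonneg (by linarith)
      rw [e1, e2, e3, e4]
      have key := submod_convex hp (x := u - t) (c := t - s) (l := v - u)
        (by linarith) (by linarith) (by linarith)
      have a1 : u - t + (v - u) = v - t := by ring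
      have a2 : u - t + (t - s) = u - s := by ring
      have a3 : u - t + (t - s) + (v - u) = v - s := by ring
      rw [a3, a1, a2] at key
      linarith
    · right
      intro s t hs hst ht
      have htu : t ≤ u := le_trans ht h
      have e1 : |t - u| = u - t := by rw [abs_sub_comm]; exact abs_of_nonneg (by linarith)
      have e2 : |s - v| = v - s := by rw [abs_sub_comm]; exact abs_of_nonneg (by linarith)
      have e3 : |t - v| = v - t := by rw [abs_sub_comm]; exact abs_of_nonneg (by linarith)
      have e4 : |s - u| = u - s := by rw [abs_sub_comm]; exact abs_of_nonneg (by linarith)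
      rw [e1, e2, e3, e4]
      have key := submod_concave hp0.le hp (x := u - t) (c := t - s) (l := v - u)
        (by linarith) (by linarith) (by linarith)
      have a1 : u - t + (v - u) = v - t := by ring
      have a2 : u - t + (t - s) = u - s := by ring
      have a3 : u - t + (t - s) + (v - u) = v - s := by ring
      rw [a3, a1, a2] at key
      linarith
  · -- block inside [u,v]
    left
    intro s t hs hst ht
    have hus : u ≤ s := le_trans h1 hs
    have htv : t ≤ v := le_trans ht h2
    have e1 : |t - u| = t - u := abs_of_nonneg (by linarith)
    have e2 : |s - v| = v - s := by rw [abs_sub_comm]; exact abs_of_nonneg (by linarith)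
    have e3 : |t - v| = v - t := by rw [abs_sub_comm]; exact abs_of_nonneg (by linarith)
    have e4 : |s - u| = s - u := abs_of_nonneg (by linarith)
    rw [e1, e2, e3, e4]
    have k1 : (s - u) ^ p ≤ (t - u) ^ p :=
      Real.rpow_le_rpow (by linarith) (by linarith) hp0.le
    have k2 : (v - t) ^ p ≤ (v - s) ^ p :=
      Real.rpow_le_rpow (by linarith) (by linarith) hp0.le
    linarith
  · -- block right of v : u ≤ v ≤ s ≤ t
    rcases le_total 1 p with hp | hp
    · left
      intro s t hs hst ht
      have hvs : v ≤ s := le_trans h hs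
      have e1 : |t - u| = t - u := abs_of_nonneg (by linarith)
      have e2 : |s - v| = s - v := abs_of_nonneg (by linarith)
      have e3 : |t - v| = t - v := abs_of_nonneg (by linarith)
      have e4 : |s - u| = s - u := abs_of_nonneg (by linarith)
      rw [e1, e2, e3, e4]
      have key := submod_convex hp (x := s - v) (c := v - u) (l := t - s)
        (by linarith) (by linarith) (by linarith)
      have a1 : s - v + (t - s) = t - v := by ring
      have a2 : s - v + (v - u) = s - u := by ring
      have a3 : s - v + (v - u) + (t - s) = t - u := by ring
      rw [a3, a1, a2] at key
      linarith
    · right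
      intro s t hs hst ht
      have hvs : v ≤ s := le_trans h hs
      have e1 : |t - u| = t - u := abs_of_nonneg (by linarith)
      have e2 : |s - v| = s - v := abs_of_nonneg (by linarith)
      have e3 : |t - v| = t - v := abs_of_nonneg (by linarith)
      have e4 : |s - u| = s - u := abs_of_nonneg (by linarith)
      rw [e1, e2, e3, e4]
      have key := submod_concave hp0.le hp (x := s - v) (c := v - u) (l := t - s)
        (by linarith) (by linarith) (by linarith)
      have a1 : s - v + (t - s) = t - v := by ring
      have a2 : s - v + (v - u) = s - u := by ring
      have a3 : s - v + (v - u) + (t - s) = t - u := by ring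
      rw [a3, a1, a2] at key
      linarith

private lemma sum_range_mul_eq (f : ℕ → ℝ) (N k : ℕ) :
    ∑ j ∈ Finset.range (N * k), f j
      = ∑ i ∈ Finset.range N, ∑ r ∈ Finset.range k, f (i * k + r) := by
  induction N with
  | zero => simp
  | succ N ih =>
    rw [Nat.succ_mul, Finset.sum_range_add, ih, Finset.sum_range_succ]

/-- Blockwise absolute sum equals absolute value of the block covariance. -/
private lemma block_abs_sum (p : ℝ) (u v lo hi : ℝ) (s : ℕ → ℝ) (k : ℕ)
    (hs0 : s 0 = lo) (hsk : s k = hi) (hlohi : lo ≤ hi)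
    (hchain : ∀ r < k, lo ≤ s r ∧ s r ≤ s (r + 1) ∧ s (r + 1) ≤ hi)
    (hsign :
      (∀ a c : ℝ, lo ≤ a → a ≤ c → c ≤ hi →
          0 ≤ (1/2) * (|c - u| ^ p + |a - v| ^ p - |c - v| ^ p - |a - u| ^ p)) ∨
      (∀ a c : ℝ, lo ≤ a → a ≤ c → c ≤ hi →
          (1/2) * (|c - u| ^ p + |a - v| ^ p - |c - v| ^ p - |a - u| ^ p) ≤ 0)) :
    ∑ r ∈ Finset.range k,
        |(1/2) * (|s (r+1) - u| ^ p + |s r - v| ^ p - |s (r+1) - v| ^ p - |s r - u| ^ p)|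
      = |(1/2) * (|hi - u| ^ p + |lo - v| ^ p - |hi - v| ^ p - |lo - u| ^ p)| := by
  set F : ℝ → ℝ := fun x => (1/2) * (|x - u| ^ p - |x - v| ^ p) with hF
  have tel : ∑ r ∈ Finset.range k,
      ((1/2) * (|s (r+1) - u| ^ p + |s r - v| ^ p - |s (r+1) - v| ^ p - |s r - u| ^ p))
      = (1/2) * (|hi - u| ^ p + |lo - v| ^ p - |hi - v| ^ p - |lo - u| ^ p) := by
    have : ∀ r : ℕ,
        (1/2) * (|s (r+1) - u| ^ p + |s r - v| ^ p - |s (r+1) - v| ^ p - |s r - u| ^ p)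
          = F (s (r+1)) - F (s r) := by
      intro r; simp only [hF]; ring
    rw [Finset.sum_congr rfl fun r _ => this r, Finset.sum_range_sub (fun r => F (s r)),
      hs0, hsk]
    simp only [hF]; ring
  rcases hsign with hpos | hneg
  · have h1 : ∀ r ∈ Finset.range k,
        |(1/2) * (|s (r+1) - u| ^ p + |s r - v| ^ p - |s (r+1) - v| ^ p - |s r - u| ^ p)|
          = (1/2) * (|s (r+1) - u| ^ p + |s r - v| ^ p - |s (r+1) - v| ^ p - |s r - u| ^ p) := by
      intro r hr
      obtain ⟨c1, c2, c3⟩ := hchain r (Finset.mem_range.1 hr)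
      exact abs_of_nonneg (hpos _ _ c1 c2 c3)
    rw [Finset.sum_congr rfl h1, tel,
      abs_of_nonneg (hpos lo hi le_rfl hlohi le_rfl)]
  · have h1 : ∀ r ∈ Finset.range k,
        |(1/2) * (|s (r+1) - u| ^ p + |s r - v| ^ p - |s (r+1) - v| ^ p - |s r - u| ^ p)|
          = -((1/2) * (|s (r+1) - u| ^ p + |s r - v| ^ p - |s (r+1) - v| ^ p - |s r - u| ^ p)) := by
      intro r hr
      obtain ⟨c1, c2, c3⟩ := hchain r (Finset.mem_range.1 hr)
      exact abs_of_nonpos (hneg _ _ c1 c2 c3)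
    rw [Finset.sum_congr rfl h1, Finset.sum_neg_distrib, tel,
      abs_of_nonpos (hneg lo hi le_rfl hlohi le_rfl)]

/-- Lemma 3.9 of the paper (coarsening inequality): for an interval `[u,v]` with
`b`-adic endpoints of level `n`, the weighted sum of absolute covariances of level
`n+1` increments against the increment on `[u,v]` is dominated by the corresponding
sum over level-`n` increments with the weights replaced by blockwise maxima. -/
theorem fbm_covariance_coarsening (b : ℕ) (hb : 2 ≤ b)
    (H : ℝ) (hH0 : 0 < H) (hH1 : H < 1)
    (RH : ℝ → ℝ → ℝ → ℝ → ℝ)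
    (hRH : ∀ u v s t : ℝ, RH u v s t =
      (1 / 2) * (|v - s| ^ (2 * H) + |u - t| ^ (2 * H)
        - |v - t| ^ (2 * H) - |u - s| ^ (2 * H)))
    (n : ℕ) (u v : ℝ) (hu : 0 ≤ u) (huv : u ≤ v) (hv : v ≤ 1)
    (hu' : ∃ iu : ℕ, u * (b : ℝ) ^ n = iu) (hv' : ∃ iv : ℕ, v * (b : ℝ) ^ n = iv)
    (μ : ℕ → ℝ) :
    ∑ j ∈ Finset.range (b ^ (n + 1)),
        |μ (j + 1)| * |RH ((j : ℝ) / (b : ℝ) ^ (n + 1))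
          (((j : ℝ) + 1) / (b : ℝ) ^ (n + 1)) u v|
      ≤ ∑ i ∈ Finset.range (b ^ n),
          (⨆ r : Fin b, |μ (i * b + (r : ℕ) + 1)|) *
            |RH ((i : ℝ) / (b : ℝ) ^ n) (((i : ℝ) + 1) / (b : ℝ) ^ n) u v| := by
  obtain ⟨iu, hiu⟩ := hu'
  obtain ⟨iv, hiv⟩ := hv'
  have hb0 : (0:ℝ) < b := by
    have : (0:ℕ) < b := by omega
    exact_mod_cast this
  have hbn : (0:ℝ) < (b:ℝ) ^ n := by positivity
  have hbn1 : (0:ℝ) < (b:ℝ) ^ (n+1) := by positivity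
  have hue : u = (iu:ℝ) / (b:ℝ) ^ n := by rw [eq_div_iff hbn.ne']; exact hiu
  have hve : v = (iv:ℝ) / (b:ℝ) ^ n := by rw [eq_div_iff hbn.ne']; exact hiv
  have hp0 : 0 < 2 * H := by linarith
  simp only [hRH]
  rw [pow_succ, sum_range_mul_eq]
  apply Finset.sum_le_sum
  intro i hiN
  rw [Finset.mem_range] at hiN
  set p := 2 * H with hp
  set lo := (i : ℝ) / (b:ℝ) ^ n with hlo
  set hi : ℝ := ((i : ℝ) + 1) / (b:ℝ) ^ n with hhi
  set s : ℕ → ℝ := fun r => ((i * b + r : ℕ) : ℝ) / (b:ℝ) ^ (n+1) with hsdef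
  have smono : ∀ a c : ℕ, a ≤ c → s a ≤ s c := by
    intro a c hac
    simp only [hsdef]
    apply (div_le_div_iff_of_pos_right hbn1).2
    exact_mod_cast Nat.add_le_add_left hac _
  have hs0 : s 0 = lo := by
    simp only [hsdef, hlo]
    rw [div_eq_div_iff hbn1.ne' hbn.ne', pow_succ]
    push_cast
    ring
  have hsk : s b = hi := by
    simp only [hsdef, hhi]
    rw [div_eq_div_iff hbn1.ne' hbn.ne', pow_succ]
    push_cast
    ring
  have hlohi : lo ≤ hi := by
    apply (div_le_div_iff_of_pos_right hbn).2
    linarith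
  have hchain : ∀ r < b, lo ≤ s r ∧ s r ≤ s (r + 1) ∧ s (r + 1) ≤ hi := by
    intro r hr
    refine ⟨?_, smono r (r+1) (by omega), ?_⟩
    · rw [← hs0]; exact smono 0 r (by omega)
    · rw [← hsk]; exact smono (r+1) b (by omega)
  have hcase : hi ≤ u ∨ (u ≤ lo ∧ hi ≤ v) ∨ v ≤ lo := by
    rcases lt_or_ge i iu with h | h
    · left
      rw [hue, hhi]
      apply (div_le_div_iff_of_pos_right hbn).2
      exact_mod_cast Nat.succ_le_of_lt h
    · rcases lt_or_ge i iv with h2 | h2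
      · right; left
        constructor
        · rw [hue, hlo]
          apply (div_le_div_iff_of_pos_right hbn).2
          exact_mod_cast h
        · rw [hve, hhi]
          apply (div_le_div_iff_of_pos_right hbn).2
          exact_mod_cast Nat.succ_le_of_lt h2
      · right; right
        rw [hve, hlo]
        apply (div_le_div_iff_of_pos_right hbn).2
        exact_mod_cast h2
  have hsign := sign_const p hp0 u v lo hi huv hcase
  have block := block_abs_sum p u v lo hi s b hs0 hsk hlohi hchain hsign
  set M := ⨆ r : Fin b, |μ (i * b + (r : ℕ) + 1)| with hM
  have hMb : BddAbove (Set.range fun r : Fin b => |μ (i * b + (r : ℕ) + 1)|) :=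
    Set.Finite.bddAbove (Set.finite_range _)
  have hMle : ∀ r : ℕ, r < b → |μ (i * b + r + 1)| ≤ M := by
    intro r hr
    exact le_ciSup hMb (⟨r, hr⟩ : Fin b)
  have hM0 : 0 ≤ M := le_trans (abs_nonneg _) (hMle 0 (by omega))
  have hcast : ∀ r : ℕ, ((i * b + r : ℕ) : ℝ) + 1 = ((i * b + (r + 1) : ℕ) : ℝ) := by
    intro r; push_cast; ring
  calc ∑ r ∈ Finset.range b,
          |μ (i * b + r + 1)| *
            |1 / 2 * (|(((i * b + r : ℕ) : ℝ) + 1) / (b:ℝ) ^ (n+1) - u| ^ p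
              + |((i * b + r : ℕ) : ℝ) / (b:ℝ) ^ (n+1) - v| ^ p
              - |(((i * b + r : ℕ) : ℝ) + 1) / (b:ℝ) ^ (n+1) - v| ^ p
              - |((i * b + r : ℕ) : ℝ) / (b:ℝ) ^ (n+1) - u| ^ p)|
      = ∑ r ∈ Finset.range b,
          |μ (i * b + r + 1)| *
            |1 / 2 * (|s (r+1) - u| ^ p + |s r - v| ^ p
              - |s (r+1) - v| ^ p - |s r - u| ^ p)| := by
        refine Finset.sum_congr rfl fun r _ => ?_
        rw [hcast r]
    _ ≤ ∑ r ∈ Finset.range b,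
          M * |1 / 2 * (|s (r+1) - u| ^ p + |s r - v| ^ p
              - |s (r+1) - v| ^ p - |s r - u| ^ p)| := by
        refine Finset.sum_le_sum fun r hr => ?_
        exact mul_le_mul_of_nonneg_right (hMle r (Finset.mem_range.1 hr)) (abs_nonneg _)
    _ = M * ∑ r ∈ Finset.range b,
          |1 / 2 * (|s (r+1) - u| ^ p + |s r - v| ^ p
              - |s (r+1) - v| ^ p - |s r - u| ^ p)| := (Finset.mul_sum _ _ _).symm
    _ = M * |1 / 2 * (|hi - u| ^ p + |lo - v| ^ p - |hi - v| ^ p - |lo - u| ^ p)| := by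
        rw [block]
end

section
/- Let p > 1 and let b ∈ {2,3,…}. Let (Y(t))_{t∈[0,1]} be a centered Gaussian process on a probability space (Ω, F, P); i.e., every finite linear combination ∑_i a_i Y(t_i) (a_i ∈ ℝ, t_i ∈ [0,1]) is a centered Gaussian real random variable. Suppose that P-almost surely, limsup_{n→∞} ∑_{k=0}^{bⁿ−1} |Y((k+1)·b^{−n}) − Y(k·b^{−n})|^p < ∞. Then, with c(s,t) := E[Y(s)·Y(t)], for every s ∈ [0,1] one has limsup_{n→∞} ∑_{k=0}^{bⁿ−1} |c(s, (k+1)·b^{−n}) − c(s, k·b^{−n})|^p < ∞. -/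
open MeasureTheory ProbabilityTheory Filter
open Real
open scoped ENNReal NNReal


lemma integrable_sq_gauss (v : ℝ≥0) :
    Integrable (fun x : ℝ => x ^ 2) (gaussianReal 0 v) := by
  by_cases hv : v = 0
  · rw [hv, gaussianReal_zero_var]
    refine ⟨(measurable_id.pow_const 2).aestronglyMeasurable, ?_⟩
    rw [HasFiniteIntegral, lintegral_dirac' _ (by fun_prop)]
    simp
  · rw [gaussianReal_of_var_ne_zero _ hv,
      integrable_withDensity_iff (measurable_gaussianPDF _ _)
        (ae_of_all _ fun x => ENNReal.ofReal_lt_top)]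
    have hv' : 0 < (v : ℝ) := by positivity
    have hb : 0 < (2 * (v : ℝ))⁻¹ := by positivity
    have H := (integrable_rpow_mul_exp_neg_mul_sq hb (s := 2) (by norm_num)).const_mul
      ((Real.sqrt (2 * π * v))⁻¹)
    refine H.congr (ae_of_all _ fun x => ?_)
    simp only [gaussianPDF, gaussianPDFReal, Real.rpow_two, sub_zero]
    rw [ENNReal.toReal_ofReal (by positivity)]
    rw [show -x^2 / (2*(v:ℝ)) = -(2*(v:ℝ))⁻¹ * x^2 by ring]
    ring







noncomputable def gaussK : ℝ := ∫ x, x ^ 2 ∂(gaussianReal 0 1)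

lemma gaussK_nonneg : 0 ≤ gaussK := integral_nonneg fun x => sq_nonneg x

lemma gauss_map_sqrt (v : ℝ≥0) :
    gaussianReal 0 v = (gaussianReal 0 1).map (fun x => Real.sqrt v * x) := by
  rw [show (fun x : ℝ => Real.sqrt v * x) = (Real.sqrt v * ·) from rfl,
    gaussianReal_map_const_mul]
  congr 1
  · simp
  · ext
    simp [Real.sq_sqrt v.2]

lemma sq_moment_gauss (v : ℝ≥0) :
    ∫ x, x ^ 2 ∂(gaussianReal 0 v) = (v : ℝ) * gaussK := by
  rw [gauss_map_sqrt v, integral_map (by fun_prop) (by fun_prop)]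
  simp only [mul_pow, integral_const_mul]
  rw [Real.sq_sqrt (NNReal.coe_nonneg v)]
  rfl

lemma memL2_gauss (v : ℝ≥0) : MemLp id 2 (gaussianReal 0 v) := by
  rw [memLp_two_iff_integrable_sq aestronglyMeasurable_id]
  exact integrable_sq_gauss v

lemma gauss_small_ball (v : ℝ≥0) {t : ℝ} (ht : 0 ≤ t) (hv : v ≠ 0) :
    (gaussianReal 0 v) {x | |x| ≤ t} ≤
      ENNReal.ofReal (2 * t * (Real.sqrt (2 * π * v))⁻¹) := by
  have hset : {x : ℝ | |x| ≤ t} = Set.Icc (-t) t := by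
    ext x; simp [abs_le]
  rw [gaussianReal_apply _ hv, hset]
  have hle : ∀ x : ℝ, gaussianPDF 0 v x ≤ ENNReal.ofReal ((Real.sqrt (2 * π * v))⁻¹) := by
    intro x
    refine ENNReal.ofReal_le_ofReal ?_
    rw [gaussianPDFReal]
    have : rexp (-(x - 0) ^ 2 / (2 * v)) ≤ 1 := by
      rw [Real.exp_le_one_iff]
      exact div_nonpos_of_nonpos_of_nonneg (neg_nonpos.mpr (sq_nonneg _)) (by positivity)
    calc (Real.sqrt (2 * π * v))⁻¹ * rexp (-(x - 0) ^ 2 / (2 * v))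
        ≤ (Real.sqrt (2 * π * v))⁻¹ * 1 := by
          apply mul_le_mul_of_nonneg_left this (by positivity)
      _ = (Real.sqrt (2 * π * v))⁻¹ := mul_one _
  calc ∫⁻ x in Set.Icc (-t) t, gaussianPDF 0 v x
      ≤ ∫⁻ _ in Set.Icc (-t) t, ENNReal.ofReal ((Real.sqrt (2 * π * v))⁻¹) :=
        lintegral_mono fun x => hle x
    _ = ENNReal.ofReal ((Real.sqrt (2 * π * v))⁻¹) * volume (Set.Icc (-t) t) := by
        rw [setLIntegral_const]
    _ = ENNReal.ofReal (2 * t * (Real.sqrt (2 * π * v))⁻¹) := by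
        rw [Real.volume_Icc, ← ENNReal.ofReal_mul (by positivity)]
        congr 1; ring

lemma gauss_median (v : ℝ≥0) {t : ℝ} (ht : 0 ≤ t)
    (h : (1:ℝ≥0∞)/2 ≤ (gaussianReal 0 v) {x | |x| ≤ t}) :
    Real.sqrt v ≤ 2 * t := by
  by_cases hv : v = 0
  · rw [hv]; simp [Real.sqrt_zero]; positivity
  · have hvpos : (0:ℝ) < v := by positivity
    have hball := gauss_small_ball v ht hv
    have h2 : ENNReal.ofReal (1/2) ≤ ENNReal.ofReal (2*t*(Real.sqrt (2*π*v))⁻¹) := by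
      refine le_trans ?_ (le_trans h hball)
      rw [ENNReal.ofReal_div_of_pos (by norm_num), ENNReal.ofReal_one, ENNReal.ofReal_ofNat]
    have hr : (1:ℝ)/2 ≤ 2*t*(Real.sqrt (2*π*v))⁻¹ :=
      (ENNReal.ofReal_le_ofReal_iff (by positivity)).mp h2
    have hs : 0 < Real.sqrt (2*π*v) := Real.sqrt_pos.mpr (by positivity)
    have hr2 : (1:ℝ)/2 ≤ 2*t / Real.sqrt (2*π*v) := by
      rw [div_eq_mul_inv]; exact hr
    have h4 : Real.sqrt (2*π*v) ≤ 4*t := by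
      rw [le_div_iff₀ hs] at hr2; linarith
    have hmul : Real.sqrt (2*π*↑v) = Real.sqrt (2*π) * Real.sqrt v := Real.sqrt_mul (by positivity) _
    have h2pi : (2:ℝ) ≤ Real.sqrt (2*π) := by
      nlinarith [Real.sq_sqrt (show (0:ℝ) ≤ 2*π by positivity), Real.sqrt_nonneg (2*π),
        Real.pi_gt_three, sq_nonneg (Real.sqrt (2*π) - 2)]
    rw [hmul] at h4
    have h5 : 2 * Real.sqrt v ≤ Real.sqrt (2*π) * Real.sqrt v :=
      mul_le_mul_of_nonneg_right h2pi (Real.sqrt_nonneg _)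
    linarith

lemma exists_half_le {Ω : Type*} [MeasurableSpace Ω] (P : Measure Ω) [IsProbabilityMeasure P]
    (S : ℕ → Ω → ℝ) (hS : ∀ n, Measurable (S n))
    (hfin : ∀ᵐ ω ∂P, ∃ M : ℝ, ∀ᶠ n in atTop, S n ω ≤ M) :
    ∃ (m₀ N : ℕ), ∀ n ≥ N, (1:ℝ≥0∞)/2 ≤ P {ω | S n ω ≤ m₀} := by
  set B : ℕ → ℕ → Set Ω := fun m N => ⋂ n, ⋂ (_ : N ≤ n), {ω | S n ω ≤ m} with hB
  have hBmeas : ∀ m N, MeasurableSet (B m N) := fun m N =>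
    MeasurableSet.iInter fun n => MeasurableSet.iInter fun _ =>
      measurableSet_le (hS n) measurable_const
  set A : ℕ → Set Ω := fun m => ⋃ N, B m N with hA
  have hAmeas : ∀ m, MeasurableSet (A m) := fun m => MeasurableSet.iUnion fun N => hBmeas m N
  have hBmem : ∀ m N ω, ω ∈ B m N ↔ ∀ n, N ≤ n → S n ω ≤ m := by
    intro m N ω
    simp [hB, Set.mem_iInter]
  have hcover : ∀ᵐ ω ∂P, ω ∈ ⋃ m, A m := by
    filter_upwards [hfin] with ω hω
    obtain ⟨M, hM⟩ := hω
    obtain ⟨N, hN⟩ := eventually_atTop.mp hM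
    refine Set.mem_iUnion.mpr ⟨⌈M⌉₊, Set.mem_iUnion.mpr ⟨N, (hBmem _ _ _).mpr fun n hn =>
      le_trans (hN n hn) (Nat.le_ceil M)⟩⟩
  have h1 : P (⋃ m, A m) = 1 := by
    rw [← prob_compl_eq_zero_iff (MeasurableSet.iUnion hAmeas)]
    rw [ae_iff] at hcover
    exact hcover
  have hAmono : Monotone A := by
    intro m m' hmm'
    refine Set.iUnion_mono fun N => ?_
    intro ω hω
    exact (hBmem _ _ _).mpr fun n hn => le_trans ((hBmem _ _ _).mp hω n hn) (by exact_mod_cast Nat.cast_le.mpr hmm')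
  have htend := tendsto_measure_iUnion_atTop (μ := P) hAmono
  rw [h1] at htend
  obtain ⟨m₀, hm₀⟩ := (htend.eventually_const_lt (by norm_num : (1:ℝ≥0∞)/2 < 1)).exists
  have hBmono : Monotone (B m₀) := by
    intro N N' hNN' ω hω
    exact (hBmem _ _ _).mpr fun n hn => (hBmem _ _ _).mp hω n (le_trans hNN' hn)
  have htend2 := tendsto_measure_iUnion_atTop (μ := P) hBmono
  have : P (⋃ N, B m₀ N) = P (A m₀) := rfl
  rw [this] at htend2
  obtain ⟨N, hN⟩ := (htend2.eventually_const_lt hm₀).exists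
  refine ⟨m₀, N, fun n hn => ?_⟩
  refine le_trans hN.le (measure_mono fun ω hω => (hBmem _ _ _).mp hω n hn)

/-- Corollary 2.7 (b) of the paper: if a centered Gaussian process has a.s. finite
`p`-th variation sums along the `b`-adic partitions, then for every `s` the function
`t ↦ c(s,t) = E[Y(s)Y(t)]` has bounded `p`-th variation sums along those partitions. -/
theorem covariance_pth_variation_bounded {Ω : Type*} [MeasurableSpace Ω]
    (P : Measure Ω) [IsProbabilityMeasure P]
    (p : ℝ) (hp : 1 < p) (b : ℕ) (hb : 2 ≤ b)
    (Y : ℝ → Ω → ℝ) (hYmeas : ∀ t, Measurable (Y t))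
    (hGauss : ∀ (k : ℕ) (a : Fin k → ℝ) (t : Fin k → ℝ),
      (∀ i, t i ∈ Set.Icc (0 : ℝ) 1) →
      ∃ v : ℝ≥0, Measure.map (fun ω => ∑ i, a i * Y (t i) ω) P = gaussianReal 0 v)
    (hfin : ∀ᵐ ω ∂P, ∃ M : ℝ, ∀ᶠ n in atTop,
      ∑ k ∈ Finset.range (b ^ n),
          |Y (((k : ℝ) + 1) / (b : ℝ) ^ n) ω - Y ((k : ℝ) / (b : ℝ) ^ n) ω| ^ p ≤ M) :
    ∀ s ∈ Set.Icc (0 : ℝ) 1, ∃ M : ℝ, ∀ᶠ n in atTop,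
      ∑ k ∈ Finset.range (b ^ n),
          |(∫ ω, Y s ω * Y (((k : ℝ) + 1) / (b : ℝ) ^ n) ω ∂P)
            - (∫ ω, Y s ω * Y ((k : ℝ) / (b : ℝ) ^ n) ω ∂P)| ^ p ≤ M := by
  have hp0 : (0:ℝ) < p := lt_trans one_pos hp
  have hp1 : p - 1 ≠ 0 := sub_ne_zero.mpr (ne_of_gt hp)
  set q : ℝ := p / (p - 1) with hq
  have hpq : p.HolderConjugate q := Real.HolderConjugate.conjExponent hp
  -- L² membership of the marginals
  have hL2 : ∀ t, t ∈ Set.Icc (0:ℝ) 1 → MemLp (Y t) 2 P := by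
    intro t ht
    obtain ⟨v, hv⟩ := hGauss 1 (fun _ => 1) (fun _ => t) (fun _ => ht)
    have heq : (fun ω => ∑ _i : Fin 1, (1:ℝ) * Y t ω) = Y t := by funext ω; simp
    rw [heq] at hv
    have h2 : MemLp id 2 (Measure.map (Y t) P) := hv ▸ memL2_gauss v
    simpa [Function.comp] using
      (memLp_map_measure_iff aestronglyMeasurable_id (hYmeas t).aemeasurable).mp h2
  -- partition points
  have hbR : (2:ℝ) ≤ (b:ℝ) := by exact_mod_cast hb
  have hbpow : ∀ n : ℕ, (0:ℝ) < (b:ℝ) ^ n := fun n => by positivity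
  have hmeml : ∀ n k : ℕ, k < b ^ n → ((k:ℝ) / (b:ℝ) ^ n) ∈ Set.Icc (0:ℝ) 1 := by
    intro n k hk
    constructor
    · positivity
    · rw [div_le_one (hbpow n)]
      have : (k:ℝ) ≤ ((b^n : ℕ) : ℝ) := by exact_mod_cast hk.le
      simpa [Nat.cast_pow] using this
  have hmemu : ∀ n k : ℕ, k < b ^ n → (((k:ℝ)+1) / (b:ℝ) ^ n) ∈ Set.Icc (0:ℝ) 1 := by
    intro n k hk
    constructor
    · positivity
    · rw [div_le_one (hbpow n)]
      have : ((k+1 : ℕ):ℝ) ≤ ((b^n : ℕ) : ℝ) := by exact_mod_cast hk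
      push_cast at this
      simpa [Nat.cast_pow] using this
  -- event selection
  set S : ℕ → Ω → ℝ := fun n ω => ∑ k ∈ Finset.range (b ^ n),
      |Y (((k : ℝ) + 1) / (b : ℝ) ^ n) ω - Y ((k : ℝ) / (b : ℝ) ^ n) ω| ^ p with hSdef
  have hSmeas : ∀ n, Measurable (S n) := by
    intro n
    exact Finset.measurable_sum _ fun k _ =>
      (((hYmeas _).sub (hYmeas _)).abs.pow_const p)
  obtain ⟨m₀, N, hN⟩ := exists_half_le P S hSmeas hfin
  intro s hs
  set σ2 : ℝ := ∫ ω, ‖Y s ω‖ ^ (2:ℝ) ∂P with hσ2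
  have hσ2nonneg : 0 ≤ σ2 := integral_nonneg fun ω => Real.rpow_nonneg (norm_nonneg _) _
  set C : ℝ := 2 * (σ2 ^ (1/2:ℝ) * gaussK ^ (1/2:ℝ) * ((m₀:ℝ)) ^ (1/p)) with hC
  have hCnonneg : 0 ≤ C := by
    have h1 : (0:ℝ) ≤ σ2 ^ (1/2:ℝ) := Real.rpow_nonneg hσ2nonneg _
    have h2 : (0:ℝ) ≤ gaussK ^ (1/2:ℝ) := Real.rpow_nonneg gaussK_nonneg _
    have h3 : (0:ℝ) ≤ ((m₀:ℝ)) ^ (1/p) := Real.rpow_nonneg (Nat.cast_nonneg _) _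
    positivity
  refine ⟨C ^ p, ?_⟩
  filter_upwards [eventually_ge_atTop N] with n hn
  -- fix n; main computation
  set m := b ^ n with hm
  set Δ : ℕ → ℝ := fun k =>
    (∫ ω, Y s ω * Y (((k : ℝ) + 1) / (b : ℝ) ^ n) ω ∂P)
      - (∫ ω, Y s ω * Y ((k : ℝ) / (b : ℝ) ^ n) ω ∂P) with hΔ
  show ∑ k ∈ Finset.range m, |Δ k| ^ p ≤ C ^ p
  set S' : ℝ := ∑ k ∈ Finset.range m, |Δ k| ^ p with hS'
  have hS'nonneg : 0 ≤ S' := Finset.sum_nonneg fun k _ => Real.rpow_nonneg (abs_nonneg _) _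
  set a : ℕ → ℝ := fun k => |Δ k| ^ (p - 2) * Δ k with ha
  have f1 : ∀ k, a k * Δ k = |Δ k| ^ p := by
    intro k
    by_cases h : Δ k = 0
    · simp [ha, h, Real.zero_rpow (ne_of_gt hp0)]
    · have habs : 0 < |Δ k| := abs_pos.mpr h
      have hd : Δ k * Δ k = |Δ k| ^ (2:ℝ) := by
        rw [Real.rpow_two, sq_abs]; ring
      calc a k * Δ k = |Δ k| ^ (p-2) * (Δ k * Δ k) := by rw [ha]; ring
        _ = |Δ k| ^ (p-2) * |Δ k| ^ (2:ℝ) := by rw [hd]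
        _ = |Δ k| ^ p := by rw [← Real.rpow_add habs]; ring_nf
  have f3 : ∀ k, |a k| = |Δ k| ^ (p - 1) := by
    intro k
    by_cases h : Δ k = 0
    · simp [ha, h, Real.zero_rpow hp1]
    · have habs : 0 < |Δ k| := abs_pos.mpr h
      rw [ha, abs_mul, abs_of_nonneg (Real.rpow_nonneg (abs_nonneg _) _)]
      calc |Δ k| ^ (p-2) * |Δ k| = |Δ k| ^ (p-2) * |Δ k| ^ (1:ℝ) := by rw [Real.rpow_one]
        _ = |Δ k| ^ (p-1) := by rw [← Real.rpow_add habs]; ring_nf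
  have hq0 : q ≠ 0 := ne_of_gt hpq.symm.pos
  have f2 : ∀ k, |a k| ^ q = |Δ k| ^ p := by
    intro k
    rw [f3]
    by_cases h : Δ k = 0
    · rw [h, abs_zero, Real.zero_rpow hp1, Real.zero_rpow hq0,
        Real.zero_rpow (ne_of_gt hp0)]
    · rw [← Real.rpow_mul (abs_nonneg _)]
      congr 1
      rw [hq]
      field_simp
  set W : Ω → ℝ := fun ω => ∑ k ∈ Finset.range m,
      a k * (Y (((k : ℝ) + 1) / (b : ℝ) ^ n) ω - Y ((k : ℝ) / (b : ℝ) ^ n) ω) with hW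
  have hWmeas : Measurable W :=
    Finset.measurable_sum _ fun k _ => (((hYmeas _).sub (hYmeas _)).const_mul _)
  obtain ⟨v, hv⟩ : ∃ v : ℝ≥0, Measure.map W P = gaussianReal 0 v := by
    classical
    set A : Fin (m + m) → ℝ := fun i =>
      Sum.elim (fun k : Fin m => a k) (fun k : Fin m => - a k) (finSumFinEquiv.symm i) with hA
    set T : Fin (m + m) → ℝ := fun i =>
      Sum.elim (fun k : Fin m => (((k : ℕ) : ℝ) + 1) / (b : ℝ) ^ n)
        (fun k : Fin m => ((k : ℕ) : ℝ) / (b : ℝ) ^ n) (finSumFinEquiv.symm i) with hT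
    have hTmem : ∀ i, T i ∈ Set.Icc (0:ℝ) 1 := by
      intro i
      rcases hcase : finSumFinEquiv.symm i with k | k
      · simp only [hT, hcase, Sum.elim_inl]
        exact hmemu n k (by simpa [hm] using k.isLt)
      · simp only [hT, hcase, Sum.elim_inr]
        exact hmeml n k (by simpa [hm] using k.isLt)
    obtain ⟨v, hv⟩ := hGauss (m + m) A T hTmem
    refine ⟨v, ?_⟩
    rw [← hv]
    congr 1
    funext ω
    rw [hW]
    rw [← Equiv.sum_comp finSumFinEquiv (fun i => A i * Y (T i) ω)]
    simp only [hA, hT, Equiv.symm_apply_apply]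
    rw [Fintype.sum_sum_type]
    simp only [Sum.elim_inl, Sum.elim_inr]
    rw [← Finset.sum_add_distrib,
      ← Fin.sum_univ_eq_sum_range (fun k =>
        a k * (Y (((k : ℝ) + 1) / (b : ℝ) ^ n) ω - Y ((k : ℝ) / (b : ℝ) ^ n) ω)) m]
    exact (Finset.sum_congr rfl fun k _ => by ring).symm
  have hWL2 : MemLp W 2 P := by
    have h2 : MemLp id 2 (Measure.map W P) := hv ▸ memL2_gauss v
    simpa [Function.comp] using
      (memLp_map_measure_iff aestronglyMeasurable_id hWmeas.aemeasurable).mp h2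
  have hW2 : ∫ ω, (W ω) ^ 2 ∂P = (v:ℝ) * gaussK := by
    rw [← sq_moment_gauss v, ← hv,
      integral_map hWmeas.aemeasurable (by fun_prop)]
  have hmul2 : ∀ (f g : Ω → ℝ), MemLp f 2 P → MemLp g 2 P →
      Integrable (fun ω => f ω * g ω) P := by
    intro f g hf hg
    have h := memLp_one_iff_integrable.mp
      (hg.smul (φ := f) hf (r := 1))
    exact h
  have hint : ∀ t, t ∈ Set.Icc (0:ℝ) 1 → Integrable (fun ω => Y s ω * Y t ω) P :=
    fun t ht => hmul2 _ _ (hL2 s hs) (hL2 t ht)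
  have step1 : ∫ ω, Y s ω * W ω ∂P = S' := by
    have heq : (fun ω => Y s ω * W ω) = (fun ω => ∑ k ∈ Finset.range m,
        a k * (Y s ω * Y (((k : ℝ) + 1) / (b : ℝ) ^ n) ω
          - Y s ω * Y ((k : ℝ) / (b : ℝ) ^ n) ω)) := by
      funext ω
      rw [hW, Finset.mul_sum]
      exact Finset.sum_congr rfl fun k _ => by ring
    rw [heq, integral_finset_sum _ (fun k hk => ?_)]
    · rw [hS']
      refine Finset.sum_congr rfl fun k hk => ?_
      have hku := hmemu n k (by simpa [hm] using Finset.mem_range.mp hk)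
      have hkl := hmeml n k (by simpa [hm] using Finset.mem_range.mp hk)
      rw [integral_const_mul, integral_sub (hint _ hku) (hint _ hkl)]
      exact f1 k
    · have hku := hmemu n k (by simpa [hm] using Finset.mem_range.mp hk)
      have hkl := hmeml n k (by simpa [hm] using Finset.mem_range.mp hk)
      exact ((hint _ hku).sub (hint _ hkl)).const_mul _
  have step2 : S' ≤ σ2 ^ (1/2:ℝ) * ((v:ℝ) * gaussK) ^ (1/2:ℝ) := by
    rw [← step1]
    have h22 : Real.HolderConjugate 2 2 := Real.HolderConjugate.two_two
    have hof : ENNReal.ofReal (2:ℝ) = 2 := by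
      rw [ENNReal.ofReal_ofNat]
    have hHolder := integral_mul_norm_le_Lp_mul_Lq (μ := P) h22
      (hof ▸ hL2 s hs) (hof ▸ hWL2)
    have hintW : Integrable (fun ω => Y s ω * W ω) P := hmul2 _ _ (hL2 s hs) hWL2
    have h1 : ∫ ω, Y s ω * W ω ∂P ≤ ∫ ω, ‖Y s ω‖ * ‖W ω‖ ∂P := by
      calc ∫ ω, Y s ω * W ω ∂P ≤ ‖∫ ω, Y s ω * W ω ∂P‖ := le_abs_self _
        _ ≤ ∫ ω, ‖Y s ω * W ω‖ ∂P := norm_integral_le_integral_norm _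
        _ = ∫ ω, ‖Y s ω‖ * ‖W ω‖ ∂P := by
            simp_rw [norm_mul]
    refine le_trans h1 (le_trans hHolder ?_)
    have hWnorm : ∫ ω, ‖W ω‖ ^ (2:ℝ) ∂P = (v:ℝ) * gaussK := by
      rw [← hW2]
      refine integral_congr_ae (ae_of_all _ fun ω => ?_)
      simp [Real.rpow_two, Real.norm_eq_abs, sq_abs]
    rw [hWnorm, ← hσ2]
  set t₀ : ℝ := S' ^ (1/q) * ((m₀:ℝ)) ^ (1/p) with ht₀def
  have ht₀ : 0 ≤ t₀ :=
    mul_nonneg (Real.rpow_nonneg hS'nonneg _) (Real.rpow_nonneg (Nat.cast_nonneg _) _)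
  have hsub : {ω | S n ω ≤ (m₀:ℝ)} ⊆ {ω | |W ω| ≤ t₀} := by
    intro ω hω
    simp only [Set.mem_setOf_eq] at hω ⊢
    have hSnonneg : 0 ≤ S n ω :=
      Finset.sum_nonneg fun k _ => Real.rpow_nonneg (abs_nonneg _) _
    have habs : |W ω| ≤ ∑ k ∈ Finset.range m,
        |a k| * |Y (((k : ℝ) + 1) / (b : ℝ) ^ n) ω - Y ((k : ℝ) / (b : ℝ) ^ n) ω| := by
      rw [hW]
      refine le_trans (Finset.abs_sum_le_sum_abs _ _) ?_
      exact le_of_eq (Finset.sum_congr rfl fun k _ => abs_mul _ _)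
    have hH := Real.inner_le_Lp_mul_Lq (Finset.range m) (fun k => |a k|)
      (fun k => |Y (((k : ℝ) + 1) / (b : ℝ) ^ n) ω - Y ((k : ℝ) / (b : ℝ) ^ n) ω|) hpq.symm
    simp only [abs_abs] at hH
    have hfa : ∑ k ∈ Finset.range m, |a k| ^ q = S' := by
      rw [hS']; exact Finset.sum_congr rfl fun k _ => f2 k
    have hSn : (∑ k ∈ Finset.range m,
        |Y (((k : ℝ) + 1) / (b : ℝ) ^ n) ω - Y ((k : ℝ) / (b : ℝ) ^ n) ω| ^ p) = S n ω := by
      rw [hSdef, hm]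
    rw [hfa, hSn] at hH
    calc |W ω| ≤ S' ^ (1/q) * (S n ω) ^ (1/p) := le_trans habs hH
      _ ≤ S' ^ (1/q) * ((m₀:ℝ)) ^ (1/p) := by
          refine mul_le_mul_of_nonneg_left ?_ (Real.rpow_nonneg hS'nonneg _)
          exact Real.rpow_le_rpow hSnonneg hω (by positivity)
  have hhalf : (1:ℝ≥0∞)/2 ≤ (gaussianReal 0 v) {x : ℝ | |x| ≤ t₀} := by
    have hset : MeasurableSet {x : ℝ | |x| ≤ t₀} :=
      measurableSet_le measurable_id.abs measurable_const
    rw [← hv, Measure.map_apply hWmeas hset]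
    exact le_trans (hN n hn) (measure_mono hsub)
  have hmed : Real.sqrt v ≤ 2 * t₀ := gauss_median v ht₀ hhalf
  have hvK : (((v:ℝ)) * gaussK) ^ (1/2:ℝ) = Real.sqrt v * gaussK ^ (1/2:ℝ) := by
    rw [Real.mul_rpow v.coe_nonneg gaussK_nonneg, Real.sqrt_eq_rpow]
  have key : S' ≤ C * S' ^ (1/q) := by
    calc S' ≤ σ2 ^ (1/2:ℝ) * ((v:ℝ) * gaussK) ^ (1/2:ℝ) := step2
      _ = σ2 ^ (1/2:ℝ) * (Real.sqrt v * gaussK ^ (1/2:ℝ)) := by rw [hvK]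
      _ ≤ σ2 ^ (1/2:ℝ) * ((2 * t₀) * gaussK ^ (1/2:ℝ)) := by
          refine mul_le_mul_of_nonneg_left ?_ (Real.rpow_nonneg hσ2nonneg _)
          exact mul_le_mul_of_nonneg_right hmed (Real.rpow_nonneg gaussK_nonneg _)
      _ = C * S' ^ (1/q) := by rw [hC, ht₀def]; ring
  rcases eq_or_lt_of_le hS'nonneg with h0 | hpos
  · rw [← h0]
    exact Real.rpow_nonneg hCnonneg p
  · have hstep : S' ^ (1/p) ≤ C := by
      have hmul : S' ^ (1/p) * S' ^ (1/q) ≤ C * S' ^ (1/q) := by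
        rw [← Real.rpow_add hpos,
          show 1/p + 1/q = 1 by rw [one_div, one_div]; exact hpq.inv_add_inv_eq_one,
          Real.rpow_one]
        exact key
      exact le_of_mul_le_mul_right hmul (Real.rpow_pos_of_pos hpos _)
    calc S' = (S' ^ (1/p)) ^ p := by
          rw [← Real.rpow_mul hS'nonneg, one_div, inv_mul_cancel₀ (ne_of_gt hp0), Real.rpow_one]
      _ ≤ C ^ p := Real.rpow_le_rpow (Real.rpow_nonneg hS'nonneg _) hstep hp0.le
end

section
/- Let b ≥ 2 be an even integer and let α ∈ (1/b, 1). Let Γ(u,v) := min(u,v) − u·v for u,v ∈ [0,1] (the covariance of the standard Brownian bridge), and define c(s,t) := ∑_{m=0}^∞ ∑_{n=0}^∞ α^{m+n} · Γ(⟨b^m s⟩, ⟨bⁿ t⟩). Then for every t ∈ [0,1], 2·c(1/2, t) = ∑_{n=0}^∞ αⁿ · min(⟨bⁿ t⟩, 1 − ⟨bⁿ t⟩); that is, the function t ↦ 2·c(1/2, t) is the Takagi–van der Waerden function with parameters b and α. -/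
/-- Proposition 2.4 of the paper (second part): for even `b` and `H = 1/2`, the
function `t ↦ 2 c(1/2, t)` is the Takagi–van der Waerden function with parameters
`b` and `α`. -/
theorem covariance_is_takagi (b : ℕ) (hb : 2 ≤ b) (hbe : Even b)
    (α : ℝ) (hα1 : 1 / (b : ℝ) < α) (hα2 : α < 1)
    (Γ : ℝ → ℝ → ℝ) (hΓ : ∀ u v : ℝ, Γ u v = min u v - u * v)
    (c : ℝ → ℝ → ℝ)
    (hc : ∀ s t : ℝ, c s t = ∑' m : ℕ, ∑' n : ℕ,
      α ^ (m + n) * Γ (Int.fract ((b : ℝ) ^ m * s)) (Int.fract ((b : ℝ) ^ n * t))) :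
    ∀ t ∈ Set.Icc (0 : ℝ) 1,
      2 * c (1 / 2) t =
        ∑' n : ℕ, α ^ n *
          min (Int.fract ((b : ℝ) ^ n * t)) (1 - Int.fract ((b : ℝ) ^ n * t)) := by
  intro t ht
  rw [hc]
  have h0 : ∀ m : ℕ, m ≠ 0 →
      (∑' n : ℕ, α ^ (m + n) * Γ (Int.fract ((b : ℝ) ^ m * (1 / 2)))
        (Int.fract ((b : ℝ) ^ n * t))) = 0 := by
    intro m hm
    have hfr : Int.fract ((b : ℝ) ^ m * (1 / 2)) = 0 := by
      obtain ⟨k, hk⟩ := hbe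
      obtain ⟨m', rfl⟩ := Nat.exists_eq_succ_of_ne_zero hm
      have : (b : ℝ) ^ (m' + 1) * (1 / 2) = ((k * b ^ m' : ℕ) : ℝ) := by
        push_cast [hk]
        ring
      rw [this, Int.fract_natCast]
    rw [hfr]
    have hz : ∀ n : ℕ, α ^ (m + n) * Γ 0 (Int.fract ((b : ℝ) ^ n * t)) = 0 := by
      intro n
      rw [hΓ, min_eq_left (Int.fract_nonneg _)]
      ring
    simp [hz]
  rw [tsum_eq_single 0 h0]
  simp only [pow_zero, one_mul, zero_add]
  have hfr0 : Int.fract ((1 : ℝ) / 2) = 1 / 2 := by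
    rw [Int.fract_eq_self]
    norm_num
  rw [hfr0, ← tsum_mul_left]
  apply tsum_congr
  intro n
  rw [hΓ]
  set x := Int.fract ((b : ℝ) ^ n * t) with hx
  have hx0 : 0 ≤ x := Int.fract_nonneg _
  have hx1 : x < 1 := Int.fract_lt_one _
  have hmin : min (1 / 2 : ℝ) x - 1 / 2 * x = min x (1 - x) / 2 := by
    rcases le_or_gt x (1 / 2) with h | h
    · rw [min_eq_right h, min_eq_left (by linarith)]; ring
    · rw [min_eq_left h.le, min_eq_right (by linarith)]; ring
  rw [hmin]
  ring
end
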